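/- arXiv:2508.04555 — 3 statements merged into one kernel-verified Lean document; each statement's English description precedes it below -/
import Mathlib

section
/- Let C be a pure k-decomposable simplicial complex with facets F_1,...,F_t. Then there exists an ordering F_1,...,F_t of the facets such that for every 1 ≤ i ≤ t, the subcomplex generated by F_1,...,F_i is k-decomposable. -/
open Finset

variable {V : Type*} [DecidableEq V]

/-- A simplicial complex: a finite collection of finite faces closed under subsets. -/
def IsComplex (C : Finset (Finset V)) : Prop :=
  ∀ F ∈ C, ∀ G, G ⊆ F → G ∈ C

/-- `F` is a facet (maximal face) of `C`. -/
def IsFacet (C : Finset (Finset V)) (F : Finset V) : Prop :=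
  F ∈ C ∧ ∀ G ∈ C, F ⊆ G → F = G

/-- `C` is pure of dimension `d`: all facets have cardinality `d+1`. -/
def IsPure (C : Finset (Finset V)) (d : ℕ) : Prop :=
  ∀ F, IsFacet C F → F.card = d + 1

/-- The deletion of a face `F`: all faces not containing `F`. -/
def del (C : Finset (Finset V)) (F : Finset V) : Finset (Finset V) :=
  C.filter (fun G => ¬ F ⊆ G)

/-- The link of a face `F`. -/
def lk (C : Finset (Finset V)) (F : Finset V) : Finset (Finset V) :=
  C.filter (fun G => G ∩ F = ∅ ∧ G ∪ F ∈ C)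

/-- The simplicial complex generated by a collection of faces. -/
def gen (S : Finset (Finset V)) : Finset (Finset V) :=
  S.biUnion Finset.powerset

/-- `C` is a (full) simplex. -/
def IsSimplexCx (C : Finset (Finset V)) : Prop :=
  ∃ F : Finset V, C = F.powerset

/-- `F` is a shedding face of the pure `d`-dimensional complex `C`. -/
def Shedding (C : Finset (Finset V)) (d : ℕ) (F : Finset V) : Prop :=
  F ∈ C ∧ IsPure (del C F) d

/-- `k`-decomposability (Provan–Billera): a simplex, or there is a shedding face `F`
with `dim F ≤ k` whose deletion and link are again `k`-decomposable. -/
inductive Decomp : ℕ → Finset (Finset V) → Prop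
  | simplex (k : ℕ) (C : Finset (Finset V)) : IsSimplexCx C → Decomp k C
  | shed (k : ℕ) (C : Finset (Finset V)) (F : Finset V) (d : ℕ) :
      F ∈ C → F.Nonempty → F.card ≤ k + 1 → IsPure C d → IsPure (del C F) d →
      Decomp k (del C F) → Decomp k (lk C F) → Decomp k C

/-- The 1-dimensional skeleton of a complex, as a simple graph. -/
def skel (C : Finset (Finset V)) : SimpleGraph V where
  Adj x y := x ≠ y ∧ ({x, y} : Finset V) ∈ C
  symm := by
    constructor
    rintro x y ⟨hxy, hm⟩
    exact ⟨hxy.symm, by rwa [Finset.pair_comm]⟩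
  loopless := ⟨fun x h => h.1 rfl⟩

/-- A shelling of a pure `d`-dimensional complex: an ordering of the facets such that
each facet meets the union of the previous ones in a pure `(d-1)`-dimensional complex. -/
def IsShelling (C : Finset (Finset V)) (d : ℕ) (L : List (Finset V)) : Prop :=
  L.Nodup ∧ (∀ F, IsFacet C F ↔ F ∈ L) ∧
  ∀ i : ℕ, 1 ≤ i → ∀ h : i < L.length,
    IsPure (gen (L.take i).toFinset ∩ (L.get ⟨i, h⟩).powerset) (d - 1)

open scoped Classical in
/-- `full^d(G)`: the pure `d`-dimensional complex generated by all `(d+1)`-cliques of `G`. -/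
noncomputable def fullC [Fintype V] (d : ℕ) (G : SimpleGraph V) : Finset (Finset V) :=
  gen ((Finset.univ.powerset).filter fun s => G.IsClique (↑s : Set V) ∧ s.card = d + 1)

open scoped Classical in
/-- All `(d+1)`-cliques of `G` containing the set `e`. -/
noncomputable def cliquesWith [Fintype V] (d : ℕ) (G : SimpleGraph V) (e : Finset V) :
    Finset (Finset V) :=
  (Finset.univ.powerset).filter fun s => G.IsClique (↑s : Set V) ∧ s.card = d + 1 ∧ e ⊆ s

/-- `G^H`: join every vertex of `H` to every other vertex. -/
def coneGraph (G : SimpleGraph V) (H : Finset V) : SimpleGraph V where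
  Adj x y := x ≠ y ∧ (G.Adj x y ∨ x ∈ H ∨ y ∈ H)
  symm := by
    constructor
    rintro x y ⟨hxy, h⟩
    refine ⟨hxy.symm, ?_⟩
    rcases h with h | h | h
    · exact Or.inl (G.adj_symm h)
    · exact Or.inr (Or.inr h)
    · exact Or.inr (Or.inl h)
  loopless := ⟨fun x h => h.1 rfl⟩

/-- The graph `G` together with the extra edge `ab`. -/
def addEdge (G : SimpleGraph V) (a b : V) : SimpleGraph V :=
  G ⊔ SimpleGraph.fromEdgeSet {s(a, b)}

/-- `C` is fully coned with respect to `H`: every vertex of `H` is adjacent to every other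
vertex of `skel C`, and every `(d+1)`-clique of `skel C` is a facet of `C`. -/
def FullyConed (C : Finset (Finset V)) (d : ℕ) (H : Finset V) : Prop :=
  (∀ h ∈ H, ∀ v : V, ({v} : Finset V) ∈ C → v ≠ h → (skel C).Adj h v) ∧
  (∀ s : Finset V, (skel C).IsClique (↑s : Set V) → s.card = d + 1 → IsFacet C s)

lemma mem_gen' {S : Finset (Finset V)} {G : Finset V} :
    G ∈ gen S ↔ ∃ s ∈ S, G ⊆ s := by
  simp [gen]

lemma exists_facet_above (S : Finset (Finset V)) {G : Finset V} (hG : G ∈ S) :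
    ∃ M, G ⊆ M ∧ IsFacet S M := by
  classical
  obtain ⟨M, hM, hmax⟩ := Finset.exists_max_image (S.filter (fun H => G ⊆ H)) Finset.card
    ⟨G, mem_filter.mpr ⟨hG, subset_rfl⟩⟩
  have hM' := mem_filter.mp hM
  refine ⟨M, hM'.2, hM'.1, ?_⟩
  intro G' hG' hsub
  exact Finset.eq_of_subset_of_card_le hsub
    (hmax G' (mem_filter.mpr ⟨hG', hM'.2.trans hsub⟩))

lemma pure_gen {S : Finset (Finset V)} {d : ℕ} (h : ∀ s ∈ S, s.card = d + 1) :
    IsPure (gen S) d := by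
  intro M hM
  obtain ⟨s, hs, hsub⟩ := mem_gen'.mp hM.1
  rw [hM.2 s (mem_gen'.mpr ⟨s, hs, subset_rfl⟩) hsub]
  exact h s hs

lemma facet_ordering_aux (k : ℕ) (C : Finset (Finset V)) (hD : Decomp k C)
    (hC : IsComplex C) :
    ∃ L : List (Finset V), L.Nodup ∧ (∀ F : Finset V, IsFacet C F ↔ F ∈ L) ∧
      ∀ i : ℕ, 1 ≤ i → i ≤ L.length → Decomp k (gen (L.take i).toFinset) := by
  induction hD with
  | simplex C hs =>
    obtain ⟨F, rfl⟩ := hs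
    refine ⟨[F], List.nodup_singleton F, ?_, ?_⟩
    · intro G
      simp only [List.mem_singleton]
      constructor
      · rintro ⟨hG, hmax⟩
        exact hmax F (mem_powerset.mpr subset_rfl) (mem_powerset.mp hG)
      · rintro rfl
        exact ⟨mem_powerset.mpr subset_rfl,
          fun G hG hsub => Finset.Subset.antisymm hsub (mem_powerset.mp hG)⟩
    · intro i hi hle
      simp only [List.length_singleton] at hle
      have : i = 1 := le_antisymm hle hi
      subst this
      have : gen (([F].take 1).toFinset) = F.powerset := by
        simp [gen]
      rw [this]
      exact Decomp.simplex k _ ⟨F, rfl⟩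
  | shed C F d hF hFne hcard hPC hPdel hDdel hDlk IHdel IHlk =>
    have hCdel : IsComplex (del C F) := by
      intro G hG H hH
      simp only [del, mem_filter] at hG ⊢
      exact ⟨hC G hG.1 H hH, fun h => hG.2 (h.trans hH)⟩
    have hClk : IsComplex (lk C F) := by
      intro G hG H hH
      simp only [lk, mem_filter] at hG ⊢
      refine ⟨hC G hG.1 H hH, ?_, ?_⟩
      · exact subset_empty.mp (hG.2.1 ▸ inter_subset_inter hH subset_rfl)
      · exact hC _ hG.2.2 _ (union_subset_union hH subset_rfl)
    obtain ⟨L₁, hN₁, hFac₁, hPre₁⟩ := IHdel hCdel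
    obtain ⟨L₂, hN₂, hFac₂, hPre₂⟩ := IHlk hClk
    -- facets of the deletion are exactly facets of C not containing F
    have hfd : ∀ G, IsFacet (del C F) G ↔ (IsFacet C G ∧ ¬ F ⊆ G) := by
      intro G
      constructor
      · rintro ⟨hG, hmax⟩
        have hGC : G ∈ C := (mem_filter.mp hG).1
        have hGF : ¬ F ⊆ G := (mem_filter.mp hG).2
        have hcardG : G.card = d + 1 := hPdel G ⟨hG, hmax⟩
        refine ⟨⟨hGC, ?_⟩, hGF⟩
        intro G' hG' hsub
        obtain ⟨M, hM1, hM2⟩ := exists_facet_above C hG'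
        have hcM : M.card = d + 1 := hPC M hM2
        have hGM : G = M :=
          Finset.eq_of_subset_of_card_le (hsub.trans hM1) (by omega)
        exact Finset.Subset.antisymm hsub (hGM ▸ hM1)
      · rintro ⟨⟨hG, hmax⟩, hGF⟩
        exact ⟨mem_filter.mpr ⟨hG, hGF⟩,
          fun G' hG' hsub => hmax G' (mem_filter.mp hG').1 hsub⟩
    -- a facet of the link gives a facet of C containing F
    have hfl₁ : ∀ H, IsFacet (lk C F) H → IsFacet C (H ∪ F) := by
      rintro H ⟨hH, hmax⟩
      have h1 := mem_filter.mp hH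
      refine ⟨h1.2.2, ?_⟩
      intro G hG hsub
      have hFG : F ⊆ G := subset_union_right.trans hsub
      have hGFlk : G \ F ∈ lk C F := by
        refine mem_filter.mpr ⟨hC G hG _ sdiff_subset, ?_, ?_⟩
        · exact sdiff_inter_self F G
        · rwa [sdiff_union_self_eq_union, union_eq_left.mpr hFG]
      have hHsub : H ⊆ G \ F := by
        intro x hx
        refine mem_sdiff.mpr ⟨hsub (mem_union_left _ hx), fun hxF => ?_⟩
        have : x ∈ H ∩ F := mem_inter.mpr ⟨hx, hxF⟩
        simp [h1.2.1] at this
      have hHe : H = G \ F := hmax _ hGFlk hHsub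
      rw [hHe, sdiff_union_self_eq_union, union_eq_left.mpr hFG]
    -- a facet of C containing F gives a facet of the link
    have hfl₂ : ∀ G, IsFacet C G → F ⊆ G → IsFacet (lk C F) (G \ F) := by
      rintro G ⟨hG, hmax⟩ hFG
      have hmem : G \ F ∈ lk C F := by
        refine mem_filter.mpr ⟨hC G hG _ sdiff_subset, ?_, ?_⟩
        · exact sdiff_inter_self F G
        · rwa [sdiff_union_self_eq_union, union_eq_left.mpr hFG]
      refine ⟨hmem, ?_⟩
      intro H hH hsub
      have h1 := mem_filter.mp hH
      have hGH : G = H ∪ F := hmax _ h1.2.2 (by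
        calc G = G \ F ∪ F := by
              rw [sdiff_union_self_eq_union, union_eq_left.mpr hFG]
          _ ⊆ H ∪ F := union_subset_union hsub subset_rfl)
      rw [hGH, union_sdiff_right, Finset.sdiff_eq_self_iff_disjoint.mpr
        (disjoint_iff_inter_eq_empty.mpr h1.2.1)]
    -- membership facts about the two lists
    have hmemL₁ : ∀ G ∈ L₁, IsFacet C G ∧ ¬ F ⊆ G := by
      intro G hG
      exact (hfd G).mp ((hFac₁ G).mpr hG)
    have hmemL₂ : ∀ H ∈ L₂, IsFacet C (H ∪ F) ∧ H ∩ F = ∅ := by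
      intro H hH
      have hfac := (hFac₂ H).mpr hH
      exact ⟨hfl₁ H hfac, (mem_filter.mp hfac.1).2.1⟩
    refine ⟨L₁ ++ L₂.map (· ∪ F), ?_, ?_, ?_⟩
    · rw [List.nodup_append]
      refine ⟨hN₁, ?_, ?_⟩
      · refine hN₂.map_on ?_
        intro H₁ h₁ H₂ h₂ he
        have e₁ : H₁ = (H₁ ∪ F) \ F := by
          rw [union_sdiff_right, Finset.sdiff_eq_self_iff_disjoint.mpr
            (disjoint_iff_inter_eq_empty.mpr (hmemL₂ H₁ h₁).2)]
        rw [e₁, he, union_sdiff_right, Finset.sdiff_eq_self_iff_disjoint.mpr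
          (disjoint_iff_inter_eq_empty.mpr (hmemL₂ H₂ h₂).2)]
      · intro G hG₁ G' hG₂ hGG'
        subst hGG'
        obtain ⟨H, hH, rfl⟩ := List.mem_map.mp hG₂
        exact (hmemL₁ _ hG₁).2 subset_union_right
    · intro G
      constructor
      · intro hGfac
        by_cases hFG : F ⊆ G
        · refine List.mem_append_right _ (List.mem_map.mpr ⟨G \ F, ?_, ?_⟩)
          · exact (hFac₂ _).mp (hfl₂ G hGfac hFG)
          · rw [sdiff_union_self_eq_union, union_eq_left.mpr hFG]
        · exact List.mem_append_left _ ((hFac₁ G).mp ((hfd G).mpr ⟨hGfac, hFG⟩))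
      · intro hG
        rcases List.mem_append.mp hG with h | h
        · exact (hmemL₁ G h).1
        · obtain ⟨H, hH, rfl⟩ := List.mem_map.mp h
          exact (hmemL₂ H hH).1
    · intro i hi hle
      by_cases hile : i ≤ L₁.length
      · rw [List.take_append_of_le_length hile]
        exact hPre₁ i hi hile
      · push_neg at hile
        set j := i - L₁.length with hj
        have hj1 : 1 ≤ j := by omega
        have hjle : j ≤ L₂.length := by
          simp only [List.length_append, List.length_map] at hle
          omega
        have htake : (L₁ ++ L₂.map (· ∪ F)).take i
            = L₁ ++ ((L₂.take j).map (· ∪ F)) := by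
          rw [List.take_append, List.take_of_length_le (by omega),
            List.map_take]
        rw [htake]
        set D := gen ((L₁ ++ (L₂.take j).map (· ∪ F)).toFinset) with hD
        -- every generator is a facet of C
        have hgenfac : ∀ s ∈ (L₁ ++ (L₂.take j).map (· ∪ F)).toFinset,
            IsFacet C s := by
          intro s hs
          rcases List.mem_append.mp (List.mem_toFinset.mp hs) with h | h
          · exact (hmemL₁ s h).1
          · obtain ⟨H, hH, rfl⟩ := List.mem_map.mp h
            exact (hmemL₂ H (List.take_subset j L₂ hH)).1
        have hDpure : IsPure D d :=
          pure_gen (fun s hs => hPC s (hgenfac s hs))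
        -- F belongs to D
        have hFD : F ∈ D := by
          have hne : L₂.take j ≠ [] := by
            intro h
            have := congrArg List.length h
            simp [min_eq_left hjle] at this
            omega
          obtain ⟨H, hH⟩ := List.exists_mem_of_ne_nil _ hne
          exact mem_gen'.mpr ⟨H ∪ F, List.mem_toFinset.mpr
            (List.mem_append_right _ (List.mem_map.mpr ⟨H, hH, rfl⟩)),
            subset_union_right⟩
        -- the deletion of F from D is exactly del C F
        have hdelD : del D F = del C F := by
          ext G
          simp only [del, mem_filter]
          constructor
          · rintro ⟨hGD, hGF⟩
            obtain ⟨s, hs, hsub⟩ := mem_gen'.mp hGD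
            exact ⟨hC s (hgenfac s hs).1 G hsub, hGF⟩
          · rintro ⟨hGC, hGF⟩
            obtain ⟨M, hM1, hM2⟩ :=
              exists_facet_above (del C F) (mem_filter.mpr ⟨hGC, hGF⟩)
            refine ⟨mem_gen'.mpr ⟨M, List.mem_toFinset.mpr
              (List.mem_append_left _ ((hFac₁ M).mp hM2)), hM1⟩, hGF⟩
        -- the link of F in D is generated by the first j facets of the link
        have hlkD : lk D F = gen ((L₂.take j).toFinset) := by
          ext G
          simp only [lk, mem_filter]
          constructor
          · rintro ⟨hGD, hGF, hGFD⟩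
            obtain ⟨s, hs, hsub⟩ := mem_gen'.mp hGFD
            rcases List.mem_append.mp (List.mem_toFinset.mp hs) with h | h
            · exact absurd (subset_union_right.trans hsub) (hmemL₁ s h).2
            · obtain ⟨H, hH, rfl⟩ := List.mem_map.mp h
              refine mem_gen'.mpr ⟨H, List.mem_toFinset.mpr hH, ?_⟩
              intro x hx
              rcases mem_union.mp (hsub (mem_union_left _ hx)) with h' | h'
              · exact h'
              · exact absurd (mem_inter.mpr ⟨hx, h'⟩) (by simp [hGF])
          · intro hG
            obtain ⟨H, hH, hsub⟩ := mem_gen'.mp hG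
            have hH' := List.mem_toFinset.mp hH
            have hHlk := hmemL₂ H (List.take_subset j L₂ hH')
            have hsmem : H ∪ F ∈ (L₁ ++ (L₂.take j).map (· ∪ F)).toFinset :=
              List.mem_toFinset.mpr
                (List.mem_append_right _ (List.mem_map.mpr ⟨H, hH', rfl⟩))
            refine ⟨mem_gen'.mpr ⟨H ∪ F, hsmem, hsub.trans subset_union_left⟩, ?_, ?_⟩
            · exact subset_empty.mp (hHlk.2 ▸ inter_subset_inter hsub subset_rfl)
            · exact mem_gen'.mpr ⟨H ∪ F, hsmem, union_subset_union hsub subset_rfl⟩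
        refine Decomp.shed k D F d hFD hFne hcard hDpure ?_ ?_ ?_
        · rw [hdelD]; exact hPdel
        · rw [hdelD]; exact hDdel
        · rw [hlkD]; exact hPre₂ j hj1 hjle

/-- The facets of a pure `k`-decomposable complex can be ordered so that every
initial segment generates a `k`-decomposable complex. -/
theorem facet_ordering (C : Finset (Finset V)) (d k : ℕ)
    (hC : IsComplex C) (hP : IsPure C d) (hD : Decomp k C) :
    ∃ L : List (Finset V), L.Nodup ∧ (∀ F : Finset V, IsFacet C F ↔ F ∈ L) ∧
      ∀ i : ℕ, 1 ≤ i → i ≤ L.length → Decomp k (gen (L.take i).toFinset) := by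
  exact facet_ordering_aux k C hD hC
end

section
/- Let C be a pure 2-dimensional 1-decomposable simplicial complex, and suppose e = {a,b} is a pair of vertices not forming an edge of skel(C) such that adding e to skel(C) creates a 3-clique {a,b,c} (i.e., {a,c} and {b,c} are edges of skel(C)). Then the complex C + ⟨{a,b,c}⟩ obtained by adding the facet {a,b,c} is 1-decomposable, with e as a shedding face, and its 1-skeleton is skel(C) together with the edge e. -/
open Finset

variable {V : Type*} [DecidableEq V]

/-- Adding a facet `{a,b,c}` along a missing edge `{a,b}` of a triangle keeps a pure
2-dimensional complex 1-decomposable, with `{a,b}` as shedding face, and adds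
exactly the edge `{a,b}` to the skeleton. -/
theorem two_dim_missing_edge (C : Finset (Finset V)) (a b c : V)
    (hC : IsComplex C) (hP : IsPure C 2) (hD : Decomp 1 C) (hab : a ≠ b)
    (hnot : ¬ (skel C).Adj a b) (hac : (skel C).Adj a c) (hbc : (skel C).Adj b c) :
    Decomp 1 (C ∪ ({a, b, c} : Finset V).powerset) ∧
    Shedding (C ∪ ({a, b, c} : Finset V).powerset) 2 {a, b} ∧
    ∀ x y : V, (skel (C ∪ ({a, b, c} : Finset V).powerset)).Adj x y ↔
      ((skel C).Adj x y ∨ (x ≠ y ∧ ({x, y} : Finset V) = {a, b})) := by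

  have hacn : a ≠ c := hac.1
  have hbcn : b ≠ c := hbc.1
  have hacC : ({a, c} : Finset V) ∈ C := hac.2
  have hbcC : ({b, c} : Finset V) ∈ C := hbc.2
  have habC : ({a, b} : Finset V) ∉ C := fun h => hnot ⟨hab, h⟩
  set T : Finset V := {a, b, c} with hT
  have habT : ({a, b} : Finset V) ⊆ T := by
    intro x hx
    rcases Finset.mem_insert.1 hx with rfl | hx
    · exact Finset.mem_insert_self _ _
    · exact Finset.mem_insert_of_mem (Finset.mem_insert.2 (Or.inl (Finset.mem_singleton.1 hx)))
  have hTcard : T.card = 3 := by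
    rw [hT, Finset.card_insert_of_notMem, Finset.card_insert_of_notMem,
      Finset.card_singleton]
    · simp [hbcn]
    · simp [hab, hacn]
  have hsubC : ∀ G : Finset V, G ⊆ T → ¬ ({a, b} : Finset V) ⊆ G → G ∈ C := by
    intro G hGT hGab
    by_cases haG : a ∈ G
    · have hb : b ∉ G := fun hb =>
        hGab (Finset.insert_subset haG (Finset.singleton_subset_iff.2 hb))
      refine hC _ hacC _ ?_
      intro x hx
      rcases Finset.mem_insert.1 (hGT hx) with rfl | hx'
      · exact Finset.mem_insert_self _ _
      rcases Finset.mem_insert.1 hx' with rfl | hx''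
      · exact absurd hx hb
      · exact Finset.mem_insert_of_mem hx''
    · refine hC _ hbcC _ ?_
      intro x hx
      rcases Finset.mem_insert.1 (hGT hx) with rfl | hx'
      · exact absurd hx haG
      · exact hx'
  have hdel : del (C ∪ T.powerset) {a, b} = C := by
    ext G
    simp only [del, Finset.mem_filter, Finset.mem_union, Finset.mem_powerset]
    constructor
    · rintro ⟨hG | hG, hn⟩
      · exact hG
      · exact hsubC G hG hn
    · intro hG
      exact ⟨Or.inl hG, fun hs => habC (hC _ hG _ hs)⟩
  have hmem_ab : ∀ H ∈ C ∪ T.powerset, ({a, b} : Finset V) ⊆ H → H ⊆ T := by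
    intro H hH hs
    rcases Finset.mem_union.1 hH with h | h
    · exact absurd (hC _ h _ hs) habC
    · exact Finset.mem_powerset.1 h
  have hcT : ({c} : Finset V) ⊆ T := by
    intro x hx
    rw [Finset.mem_singleton.1 hx]
    exact Finset.mem_insert_of_mem (Finset.mem_insert_of_mem (Finset.mem_singleton_self _))
  have hlk : lk (C ∪ T.powerset) {a, b} = ({c} : Finset V).powerset := by
    ext G
    simp only [lk, Finset.mem_filter, Finset.mem_powerset]
    constructor
    · rintro ⟨_, hint, hun⟩
      have hGT : G ∪ {a, b} ⊆ T :=
        hmem_ab _ hun Finset.subset_union_right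
      intro x hx
      have hxT : x ∈ T := hGT (Finset.mem_union_left _ hx)
      have hxab : x ∉ ({a, b} : Finset V) := by
        intro h
        have hmem : x ∈ G ∩ ({a, b} : Finset V) := Finset.mem_inter.2 ⟨hx, h⟩
        rw [hint] at hmem
        exact absurd hmem (Finset.notMem_empty x)
      rcases Finset.mem_insert.1 hxT with rfl | hxT'
      · exact absurd (Finset.mem_insert_self _ _) hxab
      rcases Finset.mem_insert.1 hxT' with rfl | hxT''
      · exact absurd (Finset.mem_insert_of_mem (Finset.mem_singleton_self _)) hxab
      · exact hxT''
    · intro hG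
      have hGT : G ⊆ T := hG.trans hcT
      refine ⟨Finset.mem_union_right _ (Finset.mem_powerset.2 hGT), ?_, ?_⟩
      · apply Finset.eq_empty_iff_forall_notMem.2
        intro x hx
        have hxc : x = c := Finset.mem_singleton.1 (hG (Finset.mem_inter.1 hx).1)
        have hxab : x ∈ ({a, b} : Finset V) := (Finset.mem_inter.1 hx).2
        rcases Finset.mem_insert.1 hxab with rfl | h
        · exact hacn hxc
        · exact hbcn ((Finset.mem_singleton.1 h).symm.trans hxc)
      · exact Finset.mem_union_right _ (Finset.mem_powerset.2 (Finset.union_subset hGT habT))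
  have habC' : ({a, b} : Finset V) ∈ C ∪ T.powerset :=
    Finset.mem_union_right _ (Finset.mem_powerset.2 habT)
  have hpureC' : IsPure (C ∪ T.powerset) 2 := by
    intro F hF
    rcases Finset.mem_union.1 hF.1 with h | h
    · exact hP F ⟨h, fun G hG hs => hF.2 G (Finset.mem_union_left _ hG) hs⟩
    · have hFT : F ⊆ T := Finset.mem_powerset.1 h
      have hFeq : F = T :=
        hF.2 T (Finset.mem_union_right _ (Finset.mem_powerset.2 (Finset.Subset.refl T))) hFT
      rw [hFeq, hTcard]
  have hcard2 : ({a, b} : Finset V).card ≤ 2 := by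
    rw [Finset.card_pair hab]
  refine ⟨?_, ⟨habC', by rw [hdel]; exact hP⟩, ?_⟩
  · refine Decomp.shed 1 _ ({a, b} : Finset V) 2 habC' (Finset.insert_nonempty _ _)
      hcard2 hpureC' (by rw [hdel]; exact hP) (by rw [hdel]; exact hD) ?_
    rw [hlk]
    exact Decomp.simplex 1 _ ⟨{c}, rfl⟩
  · intro x y
    constructor
    · rintro ⟨hxy, hm⟩
      rcases Finset.mem_union.1 hm with h | h
      · exact Or.inl ⟨hxy, h⟩
      · have hsT : ({x, y} : Finset V) ⊆ T := Finset.mem_powerset.1 h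
        by_cases hs : ({a, b} : Finset V) ⊆ ({x, y} : Finset V)
        · have hcardxy : ({x, y} : Finset V).card ≤ ({a, b} : Finset V).card := by
            rw [Finset.card_pair hab]
            exact (Finset.card_insert_le _ _).trans (by simp)
          exact Or.inr ⟨hxy, (Finset.eq_of_subset_of_card_le hs hcardxy).symm⟩
        · exact Or.inl ⟨hxy, hsubC _ hsT hs⟩
    · rintro (⟨hxy, hm⟩ | ⟨hxy, heq⟩)
      · exact ⟨hxy, Finset.mem_union_left _ hm⟩
      · exact ⟨hxy, Finset.mem_union_right _ (Finset.mem_powerset.2 (heq ▸ habT))⟩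
end

section
/- Let C be a pure simplicial complex with shedding face F, and suppose F_1,...,F_t are facets not in C that do not contain F and F_{t+1},...,F_q are facets not in C that contain F. If F is a shedding face of C + ⟨F_1,...,F_q⟩, then F is a shedding face of C + ⟨F_1,...,F_i⟩ for every 1 ≤ i ≤ q. -/
open Finset

variable {V : Type*} [DecidableEq V]

lemma mem_gen_iff (S : Finset (Finset V)) (G : Finset V) :
    G ∈ gen S ↔ ∃ s ∈ S, G ⊆ s := by
  simp [gen]

lemma exists_facet_superset (S : Finset (Finset V)) (H : Finset V) (hH : H ∈ S) :
    ∃ M, IsFacet S M ∧ H ⊆ M := by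
  obtain ⟨M, hM, hmax⟩ :=
    (S.filter (fun G => H ⊆ G)).exists_maximal ⟨H, by simp [hH]⟩
  simp only [Finset.mem_filter] at hM
  refine ⟨M, ⟨hM.1, fun G hG hMG => ?_⟩, hM.2⟩
  by_contra hne
  exact hne (le_antisymm hMG (hmax (Finset.mem_filter.mpr ⟨hG, hM.2.trans hMG⟩) hMG))

/-- If `F` stays a shedding face after adding all the new facets (those avoiding `F`
listed first), then it is a shedding face at each intermediate step. -/
theorem shedding_persists (C : Finset (Finset V)) (d : ℕ) (F : Finset V)
    (L₁ L₂ : List (Finset V))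
    (hC : IsComplex C) (hP : IsPure C d) (hshed : Shedding C d F)
    (h₁ : ∀ G ∈ L₁, G ∉ C ∧ G.card = d + 1 ∧ ¬ F ⊆ G)
    (h₂ : ∀ G ∈ L₂, G ∉ C ∧ G.card = d + 1 ∧ F ⊆ G)
    (hfull : Shedding (C ∪ gen (L₁ ++ L₂).toFinset) d F) :
    ∀ i : ℕ, 1 ≤ i → i ≤ (L₁ ++ L₂).length →
      Shedding (C ∪ gen ((L₁ ++ L₂).take i).toFinset) d F := by
  intro i hi1 hi2
  refine ⟨Finset.mem_union.mpr (Or.inl hshed.1), ?_⟩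
  rintro H ⟨hHmem, hHmax⟩
  rw [del, Finset.mem_filter] at hHmem
  obtain ⟨hH, hnF⟩ := hHmem
  -- H lies in the full deletion
  have hsub : C ∪ gen ((L₁ ++ L₂).take i).toFinset ⊆ C ∪ gen (L₁ ++ L₂).toFinset := by
    intro x hx
    rcases Finset.mem_union.mp hx with hx | hx
    · exact Finset.mem_union.mpr (Or.inl hx)
    · obtain ⟨s, hs, hxs⟩ := (mem_gen_iff _ _).mp hx
      refine Finset.mem_union.mpr (Or.inr ((mem_gen_iff _ _).mpr ⟨s, ?_, hxs⟩))
      rw [List.mem_toFinset] at hs ⊢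
      exact List.mem_of_mem_take hs
  have hHfull : H ∈ del (C ∪ gen (L₁ ++ L₂).toFinset) F := by
    rw [del, Finset.mem_filter]; exact ⟨hsub hH, hnF⟩
  obtain ⟨M, hMfac, hHM⟩ := exists_facet_superset _ _ hHfull
  have hMcard : M.card = d + 1 := hfull.2 M hMfac
  have hMmem := hMfac.1
  rw [del, Finset.mem_filter] at hMmem
  obtain ⟨hM, hMnF⟩ := hMmem
  -- helper: if there is K in the step-i deletion with H ⊆ K, K.card = d+1, then done
  have key : ∀ K : Finset V, K ∈ C ∪ gen ((L₁ ++ L₂).take i).toFinset → ¬ F ⊆ K →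
      H ⊆ K → K.card = d + 1 → H.card = d + 1 := by
    intro K hK hKnF hHK hKc
    have : H = K := hHmax K (by rw [del, Finset.mem_filter]; exact ⟨hK, hKnF⟩) hHK
    rw [this]; exact hKc
  rcases Finset.mem_union.mp hM with hMC | hMgen
  · exact key M (Finset.mem_union.mpr (Or.inl hMC)) hMnF hHM hMcard
  · obtain ⟨G, hGmem, hMG⟩ := (mem_gen_iff _ _).mp hMgen
    rw [List.mem_toFinset, List.mem_append] at hGmem
    have hGcard : G.card = d + 1 := by
      rcases hGmem with hG | hG
      · exact (h₁ G hG).2.1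
      · exact (h₂ G hG).2.1
    have hMeqG : M = G := Finset.eq_of_subset_of_card_le hMG (by omega)
    have hGL1 : G ∈ L₁ := by
      rcases hGmem with hG | hG
      · exact hG
      · exact absurd (hMeqG ▸ (h₂ G hG).2.2) hMnF
    -- now case on where H comes from
    rcases Finset.mem_union.mp hH with hHC | hHgen
    · -- H ∈ C : use shedding of C
      have hHdel : H ∈ del C F := by rw [del, Finset.mem_filter]; exact ⟨hHC, hnF⟩
      obtain ⟨M', hM'fac, hHM'⟩ := exists_facet_superset _ _ hHdel
      have hM'mem := hM'fac.1
      rw [del, Finset.mem_filter] at hM'mem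
      exact key M' (Finset.mem_union.mpr (Or.inl hM'mem.1)) hM'mem.2 hHM'
        (hshed.2 M' hM'fac)
    · obtain ⟨G', hG'mem, hHG'⟩ := (mem_gen_iff _ _).mp hHgen
      rw [List.mem_toFinset] at hG'mem
      have hG'or : G' ∈ L₁ ∨ G' ∈ L₂ :=
        List.mem_append.mp (List.mem_of_mem_take hG'mem)
      rcases hG'or with hG' | hG'
      · have hG'gen : H ∈ gen ((L₁ ++ L₂).take i).toFinset :=
          (mem_gen_iff _ _).mpr ⟨G', List.mem_toFinset.mpr hG'mem, hHG'⟩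
        exact key G' (Finset.mem_union.mpr (Or.inr ((mem_gen_iff _ _).mpr
          ⟨G', List.mem_toFinset.mpr hG'mem, Finset.Subset.refl G'⟩)))
          (h₁ G' hG').2.2 hHG' (h₁ G' hG').2.1
      · -- G' ∈ L₂ so i > L₁.length, hence G ∈ take i
        have hilen : L₁.length < i := by
          by_contra hle
          push_neg at hle
          rw [List.take_append_of_le_length hle] at hG'mem
          exact (h₁ G' (List.mem_of_mem_take hG'mem)).2.2 ((h₂ G' hG').2.2)
        have hGtake : G ∈ (L₁ ++ L₂).take i := by
          have heq : (L₁ ++ L₂).take i = L₁.take i ++ L₂.take (i - L₁.length) :=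
            List.take_append
          have heq2 : L₁.take i = L₁ := List.take_of_length_le (by omega)
          rw [heq, heq2]
          exact List.mem_append.mpr (Or.inl hGL1)
        exact key G (Finset.mem_union.mpr (Or.inr ((mem_gen_iff _ _).mpr
          ⟨G, List.mem_toFinset.mpr hGtake, hMeqG ▸ hMG⟩))) (hMeqG ▸ hMnF)
          (hHM.trans (hMeqG ▸ hMG)) hGcard
end
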